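/- The sum, over all partitions σ of {1,...,n} into exactly k blocks, of the product over blocks τ of σ of (s_τ)^{|τ|−1}, equals C(n−1, k−1) · (x_1 + ⋯ + x_n)^{n−k}, where s_τ = Σ_{i∈τ} x_i. -/

import Mathlib

open Finset
open scoped Classical

/-- `σ` is a partition of `{1,...,n}` into exactly `k` (non-empty, pairwise disjoint)
blocks whose union is all of `{1,...,n}`. -/
def IsPartitionInto {n : ℕ} (σ : Finset (Finset (Fin n))) (k : ℕ) : Prop :=
  (∀ τ ∈ σ, τ.Nonempty) ∧
  (∀ τ₁ ∈ σ, ∀ τ₂ ∈ σ, τ₁ ≠ τ₂ → Disjoint τ₁ τ₂) ∧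
  σ.biUnion id = univ ∧ σ.card = k


lemma findiff {ι : Type*} [DecidableEq ι] {A : Type*} [CommRing A] (w : ι → A) :
    ∀ (M : Finset ι) (d : ℕ), d < M.card → ∀ c : A,
      ∑ T ∈ M.powerset, (-1 : A) ^ (M \ T).card * (c + ∑ i ∈ T, w i) ^ d = 0 := by
  intro M
  induction M using Finset.induction_on with
  | empty => intro d hd; simp at hd
  | @insert z M' hz ih =>
    intro d hd c
    rw [Finset.sum_powerset_insert hz, ← Finset.sum_add_distrib]
    have hsplit : ∀ T ∈ M'.powerset,
        (-1 : A) ^ ((insert z M') \ T).card * (c + ∑ i ∈ T, w i) ^ d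
        + (-1 : A) ^ ((insert z M') \ (insert z T)).card * (c + ∑ i ∈ insert z T, w i) ^ d
        = (-1) ^ ((M' \ T).card) *
            ((c + ∑ i ∈ insert z T, w i) ^ d - (c + ∑ i ∈ T, w i) ^ d) := by
      intro T hT
      rw [Finset.mem_powerset] at hT
      have hzT : z ∉ T := fun h => hz (hT h)
      have h1 : (insert z M') \ T = insert z (M' \ T) := by
        rw [Finset.insert_sdiff_of_notMem _ hzT]
      have h2 : (insert z M') \ (insert z T) = M' \ T := by
        rw [Finset.insert_sdiff_insert, Finset.sdiff_insert_of_notMem hz]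
      have h3 : z ∉ M' \ T := by simp [hz]
      rw [h1, h2, Finset.card_insert_of_notMem h3]
      ring
    rw [Finset.sum_congr rfl hsplit]
    -- now expand the difference of powers
    have hdiff : ∀ T ∈ M'.powerset,
        (-1 : A) ^ ((M' \ T).card) *
            ((c + ∑ i ∈ insert z T, w i) ^ d - (c + ∑ i ∈ T, w i) ^ d)
        = ∑ j ∈ Finset.range d,
            (w z ^ (d - j) * d.choose j) *
              ((-1 : A) ^ ((M' \ T).card) * (c + ∑ i ∈ T, w i) ^ j) := by
      intro T hT
      rw [Finset.mem_powerset] at hT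
      have hzT : z ∉ T := fun h => hz (hT h)
      rw [Finset.sum_insert hzT]
      have hexp : (c + (w z + ∑ i ∈ T, w i)) ^ d
          = ∑ j ∈ Finset.range (d + 1),
              (c + ∑ i ∈ T, w i) ^ j * w z ^ (d - j) * d.choose j := by
        rw [show c + (w z + ∑ i ∈ T, w i) = (c + ∑ i ∈ T, w i) + w z by ring, add_pow]
      rw [hexp, Finset.sum_range_succ]
      simp only [Nat.sub_self, pow_zero, Nat.choose_self, Nat.cast_one, mul_one]
      rw [add_sub_cancel_right, Finset.mul_sum]
      apply Finset.sum_congr rfl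
      intro j hj
      ring
    rw [Finset.sum_congr rfl hdiff, Finset.sum_comm]
    apply Finset.sum_eq_zero
    intro j hj
    rw [Finset.mem_range] at hj
    have hc := Finset.card_insert_of_notMem hz
    rw [← Finset.mul_sum, ih j (by omega) c, mul_zero]

noncomputable def rho {ι A : Type*} [CommRing A] (t : A) (D : Finset ι) (w : ι → A) : A :=
  if D = ∅ then 1 else t * (t + ∑ i ∈ D, w i) ^ (D.card - 1)

/-- double counting helper -/
lemma sum_insert_erase {α β : Type*} [DecidableEq α] [AddCommMonoid β] (M : Finset α)
    (F : Finset α → β) :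
    ∑ z ∈ M, ∑ T ∈ (M.erase z).powerset, F (insert z T)
      = ∑ T ∈ M.powerset, T.card • F T := by
  have h1 : ∀ z ∈ M, ∑ T ∈ (M.erase z).powerset, F (insert z T)
      = ∑ T ∈ M.powerset.filter (fun T => z ∈ T), F T := by
    intro z hz
    have himg : M.powerset.filter (fun T => z ∈ T) = (M.erase z).powerset.image (insert z) := by
      ext T
      simp only [Finset.mem_filter, Finset.mem_powerset, Finset.mem_image]
      constructor
      · rintro ⟨hTM, hzT⟩
        exact ⟨T.erase z, Finset.erase_subset_erase _ hTM, Finset.insert_erase hzT⟩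
      · rintro ⟨T', hT', rfl⟩
        exact ⟨Finset.insert_subset hz (hT'.trans (Finset.erase_subset _ _)),
          Finset.mem_insert_self _ _⟩
    rw [himg, Finset.sum_image]
    intro a ha b hb hab
    have hza : z ∉ a := fun h => Finset.notMem_erase z M ((Finset.mem_powerset.mp ha) h)
    have hzb : z ∉ b := fun h => Finset.notMem_erase z M ((Finset.mem_powerset.mp hb) h)
    rw [← Finset.erase_insert hza, hab, Finset.erase_insert hzb]
  rw [Finset.sum_congr rfl h1]
  have h2 : ∀ z ∈ M, ∑ T ∈ M.powerset.filter (fun T => z ∈ T), F T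
      = ∑ T ∈ M.powerset, if z ∈ T then F T else 0 := fun z _ => Finset.sum_filter _ _
  rw [Finset.sum_congr rfl h2, Finset.sum_comm]
  refine Finset.sum_congr rfl fun T hT => ?_
  rw [Finset.mem_powerset] at hT
  rw [← Finset.sum_filter]
  have : M.filter (fun z => z ∈ T) = T := by
    rw [Finset.filter_mem_eq_inter, Finset.inter_eq_right.mpr hT]
  rw [this, Finset.sum_const]

section HurwitzPoly
variable {ι : Type*} [DecidableEq ι]

noncomputable def x0 : MvPolynomial (Option ι) ℤ := MvPolynomial.X none
noncomputable def wB : ι → MvPolynomial (Option ι) ℤ := fun i => MvPolynomial.X (some i)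

noncomputable def LHSp (M : Finset ι) : Polynomial (MvPolynomial (Option ι) ℤ) :=
  ∑ T ∈ M.powerset,
    Polynomial.C (rho x0 (M \ T) wB) * (Polynomial.X + Polynomial.C (∑ i ∈ T, wB i)) ^ T.card

noncomputable def RHSp (M : Finset ι) : Polynomial (MvPolynomial (Option ι) ℤ) :=
  (Polynomial.X + Polynomial.C (x0 + ∑ i ∈ M, wB i)) ^ M.card

lemma hurwitz_poly : ∀ (m : ℕ) (M : Finset ι), M.card = m → LHSp M = RHSp M := by
  intro m
  induction m using Nat.strong_induction_on with
  | _ m ih =>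
    intro M hM
    rcases Nat.eq_zero_or_pos m with hm0 | hmpos
    · subst hm0
      rw [Finset.card_eq_zero] at hM
      subst hM
      simp [LHSp, RHSp, rho]
    -- inductive step
    · -- the shifted IH, for each z ∈ M
      have hzIH : ∀ z ∈ M,
          ∑ T ∈ (M.erase z).powerset,
            Polynomial.C (rho x0 ((M.erase z) \ T) wB) *
              (Polynomial.X + Polynomial.C (wB z + ∑ i ∈ T, wB i)) ^ T.card
          = (Polynomial.X + Polynomial.C (x0 + ∑ i ∈ M, wB i)) ^ (m - 1) := by
        intro z hz
        have hcard : (M.erase z).card = m - 1 := by rw [Finset.card_erase_of_mem hz, hM]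
        have IH := ih (m - 1) (by omega) (M.erase z) hcard
        have h := congrArg
          (Polynomial.eval₂RingHom (Polynomial.C)
            (Polynomial.X + Polynomial.C (wB z))) IH
        simp only [LHSp, RHSp, map_sum, map_mul, map_pow, map_add,
          Polynomial.coe_eval₂RingHom, Polynomial.eval₂_C, Polynomial.eval₂_X, hcard] at h
        have harr : (Polynomial.X + Polynomial.C (x0 + ∑ i ∈ M, wB i)) ^ (m - 1)
            = (Polynomial.X + Polynomial.C (wB z) +
                (Polynomial.C x0 + ∑ x ∈ M.erase z, Polynomial.C (wB x))) ^ (m - 1) := by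
          congr 1
          rw [← Finset.add_sum_erase _ wB hz]
          simp only [Polynomial.C_add, map_sum]
          ring
        rw [harr, ← h]
        refine Finset.sum_congr rfl fun T hT => ?_
        simp only [Polynomial.C_add, map_sum]
        ring
      -- derivative of LHSp
      have hdL : Polynomial.derivative (LHSp M)
          = ∑ T ∈ M.powerset, T.card •
              (Polynomial.C (rho x0 (M \ T) wB) *
                (Polynomial.X + Polynomial.C (∑ i ∈ T, wB i)) ^ (T.card - 1)) := by
        unfold LHSp
        rw [map_sum]
        refine Finset.sum_congr rfl fun T hT => ?_
        rw [Polynomial.derivative_C_mul, Polynomial.derivative_pow,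
          Polynomial.derivative_X_add_C, mul_one, nsmul_eq_mul]
        simp only [Polynomial.C_eq_natCast]
        ring
      -- rewrite via double counting and shifted IH
      have hdL2 : Polynomial.derivative (LHSp M)
          = M.card • (Polynomial.X + Polynomial.C (x0 + ∑ i ∈ M, wB i)) ^ (m - 1) := by
        rw [hdL, ← sum_insert_erase M
          (fun T => Polynomial.C (rho x0 (M \ T) wB) *
            (Polynomial.X + Polynomial.C (∑ i ∈ T, wB i)) ^ (T.card - 1))]
        rw [← Finset.sum_const]
        refine Finset.sum_congr rfl fun z hz => ?_
        rw [← hzIH z hz]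
        refine Finset.sum_congr rfl fun T hT => ?_
        rw [Finset.mem_powerset] at hT
        have hzT : z ∉ T := fun h => Finset.notMem_erase z M (hT h)
        have hset : M \ insert z T = (M.erase z) \ T := by
          ext a
          simp only [Finset.mem_sdiff, Finset.mem_insert, Finset.mem_erase]
          tauto
        rw [Finset.card_insert_of_notMem hzT, Finset.sum_insert hzT, hset]
        simp
      -- derivative of RHSp
      have hdR : Polynomial.derivative (RHSp M)
          = M.card • (Polynomial.X + Polynomial.C (x0 + ∑ i ∈ M, wB i)) ^ (m - 1) := by
        unfold RHSp
        rw [hM, Polynomial.derivative_pow, Polynomial.derivative_X_add_C, mul_one,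
          nsmul_eq_mul]
        simp only [Polynomial.C_eq_natCast]
      have hder : Polynomial.derivative (LHSp M - RHSp M) = 0 := by
        rw [map_sub, hdL2, hdR, sub_self]
      have hC := Polynomial.eq_C_of_derivative_eq_zero hder
      -- evaluate at t0
      set t0 : MvPolynomial (Option ι) ℤ := -(x0 + ∑ i ∈ M, wB i) with ht0
      have hevR : (RHSp M).eval t0 = 0 := by
        unfold RHSp
        rw [Polynomial.eval_pow, Polynomial.eval_add, Polynomial.eval_X, Polynomial.eval_C,
          ht0, neg_add_cancel, hM, zero_pow (by omega : m ≠ 0)]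
      have hevL : (LHSp M).eval t0 = 0 := by
        unfold LHSp
        rw [Polynomial.eval_finset_sum]
        have hterm : ∀ T ∈ M.powerset,
            (Polynomial.C (rho x0 (M \ T) wB) *
              (Polynomial.X + Polynomial.C (∑ i ∈ T, wB i)) ^ T.card).eval t0
            = rho x0 (M \ T) wB * ((-1) ^ T.card * (x0 + ∑ i ∈ M \ T, wB i) ^ T.card) := by
          intro T hT
          rw [Finset.mem_powerset] at hT
          have hsd : (∑ i ∈ M \ T, wB i) + ∑ i ∈ T, wB i = ∑ i ∈ M, wB i :=
            Finset.sum_sdiff hT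
          have ht : t0 + ∑ i ∈ T, wB i = -(x0 + ∑ i ∈ M \ T, wB i) := by
            rw [ht0]; linear_combination hsd
          simp only [Polynomial.eval_mul, Polynomial.eval_pow, Polynomial.eval_add,
            Polynomial.eval_X, Polynomial.eval_C]
          rw [ht, neg_pow]
        rw [Finset.sum_congr rfl hterm]
        -- reindex T ↦ M \ T
        rw [Finset.sum_nbij' (i := fun T => M \ T) (j := fun D => M \ D)
          (g := fun D => rho x0 D wB *
            ((-1) ^ (M \ D).card * (x0 + ∑ i ∈ D, wB i) ^ (M \ D).card))
          (hi := fun T hT => Finset.mem_powerset.mpr (Finset.sdiff_subset))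
          (hj := fun D hD => Finset.mem_powerset.mpr (Finset.sdiff_subset))
          (left_neg := fun T hT =>
            Finset.sdiff_sdiff_eq_self (Finset.mem_powerset.mp hT))
          (right_neg := fun D hD =>
            Finset.sdiff_sdiff_eq_self (Finset.mem_powerset.mp hD))
          (h := ?_)]
        swap
        · intro T hT
          have hss := Finset.sdiff_sdiff_eq_self (Finset.mem_powerset.mp hT)
          simp only [hss]
        -- now show the reflected sum is x0 * findiff-sum
        have hterm2 : ∀ D ∈ M.powerset,
            rho x0 D wB * ((-1) ^ (M \ D).card * (x0 + ∑ i ∈ D, wB i) ^ (M \ D).card)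
            = x0 * ((-1) ^ (M \ D).card * (x0 + ∑ i ∈ D, wB i) ^ (m - 1)) := by
          intro D hD
          rw [Finset.mem_powerset] at hD
          have hcsd : (M \ D).card = m - D.card := by
            rw [Finset.card_sdiff_of_subset hD, hM]
          by_cases hDe : D = ∅
          · subst hDe
            have hx : (x0 : MvPolynomial (Option ι) ℤ) ^ m = x0 * x0 ^ (m - 1) := by
              rw [← pow_succ']
              congr 1
              omega
            simp only [rho, if_pos rfl, Finset.sum_empty, add_zero, one_mul,
              Finset.sdiff_empty, hM, hx, if_true, ite_true]
            ring_nf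
          · rw [rho, if_neg hDe]
            have hD1 : 1 ≤ D.card := Finset.card_pos.mpr (Finset.nonempty_of_ne_empty hDe)
            have hDm : D.card ≤ m := by rw [← hM]; exact Finset.card_le_card hD
            rw [hcsd, show m - 1 = (D.card - 1) + (m - D.card) by omega, pow_add]
            ring
        rw [Finset.sum_congr rfl hterm2, ← Finset.mul_sum]
        have hfd := findiff wB M (m - 1) (by omega) x0
        rw [show (∑ D ∈ M.powerset, (-1 : MvPolynomial (Option ι) ℤ) ^ (M \ D).card *
            (x0 + ∑ i ∈ D, wB i) ^ (m - 1)) = 0 from hfd, mul_zero]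
      have h0 : (LHSp M - RHSp M).eval t0 = 0 := by
        rw [Polynomial.eval_sub, hevL, hevR, sub_self]
      rw [hC, Polynomial.eval_C] at h0
      have : LHSp M - RHSp M = 0 := by rw [hC, h0, map_zero]
      exact sub_eq_zero.mp this

lemma hurwitz {A : Type*} [CommRing A] (x y : A) (w : ι → A) (M : Finset ι) :
    ∑ T ∈ M.powerset, rho x (M \ T) w * (y + ∑ i ∈ T, w i) ^ T.card
      = (x + y + ∑ i ∈ M, w i) ^ M.card := by
  have h := hurwitz_poly (ι := ι) M.card M rfl
  set g : MvPolynomial (Option ι) ℤ →+* A :=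
    (MvPolynomial.eval₂Hom (Int.castRingHom A) (fun o => Option.elim o x w)) with hgdef
  have hrho : ∀ D : Finset ι, g (rho x0 D wB) = rho x D w := by
    intro D
    unfold rho
    rw [apply_ite g, map_one, map_mul, map_pow, map_add, map_sum]
    simp [hgdef, x0, wB]
  have hwi : ∀ i : ι, g (wB i) = w i := by intro i; simp [hgdef, wB]
  have hx0 : g x0 = x := by simp [hgdef, x0]
  have hg := congrArg (Polynomial.eval₂RingHom g y) h
  simp only [LHSp, RHSp, map_sum, map_mul, map_pow, map_add,
    Polynomial.coe_eval₂RingHom, Polynomial.eval₂_C, Polynomial.eval₂_X,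
    hrho, hwi, hx0] at hg
  rw [show x + y + ∑ i ∈ M, w i = y + (x + ∑ i ∈ M, w i) by ring, ← hg]
end HurwitzPoly



section Partition
variable {ι : Type*} [Fintype ι] [DecidableEq ι]

def isPartOf (S : Finset ι) (σ : Finset (Finset ι)) : Prop :=
  (∀ τ ∈ σ, τ.Nonempty) ∧ (∀ τ₁ ∈ σ, ∀ τ₂ ∈ σ, τ₁ ≠ τ₂ → Disjoint τ₁ τ₂) ∧ σ.biUnion id = S

noncomputable def partsOf (S : Finset ι) : Finset (Finset (Finset ι)) :=
  Finset.univ.filter (fun σ => isPartOf S σ)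

lemma mem_partsOf {S : Finset ι} {σ : Finset (Finset ι)} : σ ∈ partsOf S ↔ isPartOf S σ := by
  simp [partsOf]

lemma partsOf_empty : partsOf (∅ : Finset ι) = {∅} := by
  ext σ
  rw [mem_partsOf, Finset.mem_singleton]
  constructor
  · rintro ⟨hne, -, hbu⟩
    rw [Finset.eq_empty_iff_forall_notMem]
    intro τ hτ
    obtain ⟨a, ha⟩ := hne τ hτ
    have : a ∈ σ.biUnion id := Finset.mem_biUnion.mpr ⟨τ, hτ, ha⟩
    rw [hbu] at this
    exact absurd this (Finset.notMem_empty a)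
  · rintro rfl
    exact ⟨fun τ h => absurd h (Finset.notMem_empty τ), fun τ₁ h => absurd h (Finset.notMem_empty τ₁), rfl⟩

noncomputable def blockOf (σ : Finset (Finset ι)) (e : ι) : Finset ι :=
  (σ.filter (fun τ => e ∈ τ)).sup id

lemma blockOf_spec {S : Finset ι} {σ : Finset (Finset ι)} {e : ι}
    (h : isPartOf S σ) (he : e ∈ S) :
    blockOf σ e ∈ σ ∧ e ∈ blockOf σ e ∧ ∀ τ ∈ σ, e ∈ τ → τ = blockOf σ e := by
  obtain ⟨hne, hdisj, hbu⟩ := h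
  have he' : e ∈ σ.biUnion id := hbu ▸ he
  obtain ⟨τ0, hτ0, heτ0⟩ := Finset.mem_biUnion.mp he'
  have huniq : ∀ τ ∈ σ, e ∈ τ → τ = τ0 := by
    intro τ hτ heτ
    by_contra hneq
    exact (Finset.disjoint_left.mp (hdisj τ hτ τ0 hτ0 hneq) heτ) heτ0
  have hfil : σ.filter (fun τ => e ∈ τ) = {τ0} := by
    ext τ
    simp only [Finset.mem_filter, Finset.mem_singleton]
    constructor
    · rintro ⟨h1, h2⟩; exact huniq τ h1 h2
    · rintro rfl; exact ⟨hτ0, heτ0⟩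
  have hbl : blockOf σ e = τ0 := by
    rw [blockOf, hfil, Finset.sup_singleton, id]
  rw [hbl]
  exact ⟨hτ0, heτ0, huniq⟩

lemma insert_isPartOf {S B : Finset ι} {σ' : Finset (Finset ι)} {e : ι}
    (he : e ∈ S) (hB : B ⊆ S.erase e) (hσ' : isPartOf ((S.erase e) \ B) σ') :
    isPartOf S (insert (insert e B) σ') := by
  have hblocks : ∀ τ ∈ σ', τ ⊆ (S.erase e) \ B := by
    intro τ hτ a ha
    rw [← hσ'.2.2]
    exact Finset.mem_biUnion.mpr ⟨τ, hτ, ha⟩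
  refine ⟨?_, ?_, ?_⟩
  · intro τ hτ
    rcases Finset.mem_insert.mp hτ with rfl | h
    · exact ⟨e, Finset.mem_insert_self e B⟩
    · exact hσ'.1 τ h
  · intro τ₁ h₁ τ₂ h₂ hne
    have hdisjnew : ∀ τ ∈ σ', Disjoint (insert e B) τ := by
      intro τ hτ
      rw [Finset.disjoint_left]
      intro a ha haτ
      have h2 := hblocks τ hτ haτ
      simp only [Finset.mem_sdiff, Finset.mem_erase] at h2
      rcases Finset.mem_insert.mp ha with rfl | h
      exacts [h2.1.1 rfl, h2.2 h]
    rcases Finset.mem_insert.mp h₁ with rfl | h₁' <;>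
      rcases Finset.mem_insert.mp h₂ with rfl | h₂'
    · exact absurd rfl hne
    · exact hdisjnew _ h₂'
    · exact (hdisjnew _ h₁').symm
    · exact hσ'.2.1 τ₁ h₁' τ₂ h₂' hne
  · rw [Finset.biUnion_insert, hσ'.2.2]
    ext a
    simp only [Finset.mem_union, Finset.mem_insert, Finset.mem_sdiff, Finset.mem_erase, id]
    constructor
    · rintro (⟨rfl | h⟩ | ⟨⟨-, h⟩, -⟩)
      · exact he
      · exact Finset.mem_of_mem_erase (hB h)
      · exact h
    · intro haS
      by_cases hae : a = e
      · exact Or.inl (Or.inl hae)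
      · by_cases haB : a ∈ B
        · exact Or.inl (Or.inr haB)
        · exact Or.inr ⟨⟨hae, haS⟩, haB⟩

lemma sum_partsOf {β : Type*} [AddCommMonoid β] (S : Finset ι) (e : ι) (he : e ∈ S)
    (f : Finset (Finset ι) → β) :
    ∑ σ ∈ partsOf S, f σ
      = ∑ B ∈ (S.erase e).powerset, ∑ σ' ∈ partsOf ((S.erase e) \ B),
          f (insert (insert e B) σ') := by
  -- fiber decomposition by the block containing e (minus e)
  rw [← Finset.sum_fiberwise_of_maps_to
    (g := fun σ => (blockOf σ e).erase e) (t := (S.erase e).powerset) ?hmaps]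
  case hmaps =>
    intro σ hσ
    rw [mem_partsOf] at hσ
    obtain ⟨hbσ, hbe, -⟩ := blockOf_spec hσ he
    rw [Finset.mem_powerset]
    apply Finset.erase_subset_erase
    intro a ha
    rw [← hσ.2.2]
    exact Finset.mem_biUnion.mpr ⟨_, hbσ, ha⟩
  refine Finset.sum_congr rfl fun B hB => ?_
  rw [Finset.mem_powerset] at hB
  have heB : e ∉ B := fun h => Finset.notMem_erase e S (hB h)
  -- bijection between the fiber and partitions of the rest
  refine Finset.sum_nbij' (i := fun σ => σ.erase (blockOf σ e))
    (j := fun σ' => insert (insert e B) σ') ?hi ?hj ?hli ?hri ?hval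
  case hi =>
    intro σ hσ
    rw [Finset.mem_filter, mem_partsOf] at hσ
    obtain ⟨hpart, hBeq⟩ := hσ
    obtain ⟨hbσ, hbe, -⟩ := blockOf_spec hpart he
    have hτ0 : blockOf σ e = insert e B := by
      rw [← hBeq, Finset.insert_erase hbe]
    rw [mem_partsOf]
    refine ⟨fun τ hτ => hpart.1 τ (Finset.mem_of_mem_erase hτ),
      fun τ₁ h₁ τ₂ h₂ hne => hpart.2.1 τ₁ (Finset.mem_of_mem_erase h₁) τ₂
        (Finset.mem_of_mem_erase h₂) hne, ?_⟩
    ext a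
    simp only [Finset.mem_biUnion, Finset.mem_erase, id]
    constructor
    · rintro ⟨τ, ⟨hτne, hτσ⟩, haτ⟩
      have haS : a ∈ S := by
        rw [← hpart.2.2]; exact Finset.mem_biUnion.mpr ⟨τ, hτσ, haτ⟩
      have haτ0 : a ∉ blockOf σ e := Finset.disjoint_left.mp
        (hpart.2.1 τ hτσ _ hbσ hτne) haτ
      rw [hτ0] at haτ0
      simp only [Finset.mem_sdiff, Finset.mem_erase]
      refine ⟨⟨fun hae => haτ0 (hae ▸ Finset.mem_insert_self e B), haS⟩,
        fun haB => haτ0 (Finset.mem_insert_of_mem haB)⟩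
    · rintro ha
      simp only [Finset.mem_sdiff, Finset.mem_erase] at ha
      obtain ⟨⟨hane, haS⟩, haB⟩ := ha
      have : a ∈ σ.biUnion id := by rw [hpart.2.2]; exact haS
      obtain ⟨τ, hτσ, haτ⟩ := Finset.mem_biUnion.mp this
      refine ⟨τ, ⟨fun hττ0 => ?_, hτσ⟩, haτ⟩
      simp only [id_eq] at haτ
      rw [hττ0, hτ0] at haτ
      rcases Finset.mem_insert.mp haτ with h | h
      exacts [hane h, haB h]
  case hj =>
    intro σ' hσ'
    rw [mem_partsOf] at hσ'
    have hpart : isPartOf S (insert (insert e B) σ') := insert_isPartOf he hB hσ'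
    rw [Finset.mem_filter, mem_partsOf]
    refine ⟨hpart, ?_⟩
    have hbl : insert e B = blockOf (insert (insert e B) σ') e :=
      (blockOf_spec hpart he).2.2 _ (Finset.mem_insert_self _ _) (Finset.mem_insert_self e B)
    rw [← hbl, Finset.erase_insert heB]
  case hli =>
    intro σ hσ
    show insert (insert e B) (σ.erase (blockOf σ e)) = σ
    rw [Finset.mem_filter, mem_partsOf] at hσ
    obtain ⟨hpart, hBeq⟩ := hσ
    obtain ⟨hbσ, hbe, -⟩ := blockOf_spec hpart he
    have hτ0 : insert e B = blockOf σ e := by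
      rw [← hBeq, Finset.insert_erase hbe]
    rw [hτ0, Finset.insert_erase hbσ]
  case hri =>
    intro σ' hσ'
    show (insert (insert e B) σ').erase (blockOf (insert (insert e B) σ') e) = σ'
    rw [mem_partsOf] at hσ'
    have hnotmem : insert e B ∉ σ' := by
      intro hmem
      have h1 : e ∈ σ'.biUnion id := Finset.mem_biUnion.mpr ⟨_, hmem, Finset.mem_insert_self e B⟩
      rw [hσ'.2.2] at h1
      simp at h1
    have hpart : isPartOf S (insert (insert e B) σ') := insert_isPartOf he hB hσ'
    have hbl : insert e B = blockOf (insert (insert e B) σ') e :=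
      (blockOf_spec hpart he).2.2 _ (Finset.mem_insert_self _ _) (Finset.mem_insert_self e B)
    rw [← hbl, Finset.erase_insert hnotmem]
  case hval =>
    intro σ hσ
    show f σ = f (insert (insert e B) (σ.erase (blockOf σ e)))
    rw [Finset.mem_filter, mem_partsOf] at hσ
    obtain ⟨hpart, hBeq⟩ := hσ
    obtain ⟨hbσ, hbe, -⟩ := blockOf_spec hpart he
    have hτ0 : insert e B = blockOf σ e := by
      rw [← hBeq, Finset.insert_erase hbe]
    rw [hτ0, Finset.insert_erase hbσ]
end Partition

section GenFun
variable {ι : Type*} [Fintype ι] [DecidableEq ι] {A : Type*} [CommRing A]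

lemma genfun (x : ι → A) :
    ∀ (m : ℕ) (S : Finset ι), S.card = m →
      ∑ σ ∈ partsOf S, Polynomial.X ^ σ.card *
          Polynomial.C (∏ τ ∈ σ, (∑ i ∈ τ, x i) ^ (τ.card - 1))
        = rho Polynomial.X S (fun i => Polynomial.C (x i)) := by
  intro m
  induction m using Nat.strong_induction_on with
  | _ m ih =>
    intro S hS
    rcases Nat.eq_zero_or_pos m with hm0 | hmpos
    · subst hm0
      rw [Finset.card_eq_zero] at hS
      subst hS
      rw [partsOf_empty]
      simp [rho]
    · have hSne : S.Nonempty := Finset.card_pos.mp (hS ▸ hmpos)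
      obtain ⟨e, he⟩ := hSne
      rw [sum_partsOf S e he]
      have hinner : ∀ B ∈ (S.erase e).powerset,
          ∑ σ' ∈ partsOf ((S.erase e) \ B),
            Polynomial.X ^ (insert (insert e B) σ').card *
              Polynomial.C (∏ τ ∈ insert (insert e B) σ', (∑ i ∈ τ, x i) ^ (τ.card - 1))
          = rho Polynomial.X ((S.erase e) \ B) (fun i => Polynomial.C (x i)) *
              ((Polynomial.C (x e) + ∑ i ∈ B, Polynomial.C (x i)) ^ B.card * Polynomial.X) := by
        intro B hB
        rw [Finset.mem_powerset] at hB
        have heB : e ∉ B := fun h => Finset.notMem_erase e S (hB h)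
        have hterm : ∀ σ' ∈ partsOf ((S.erase e) \ B),
            Polynomial.X ^ (insert (insert e B) σ').card *
              Polynomial.C (∏ τ ∈ insert (insert e B) σ', (∑ i ∈ τ, x i) ^ (τ.card - 1))
            = ((Polynomial.C (x e) + ∑ i ∈ B, Polynomial.C (x i)) ^ B.card * Polynomial.X) *
                (Polynomial.X ^ σ'.card *
                  Polynomial.C (∏ τ ∈ σ', (∑ i ∈ τ, x i) ^ (τ.card - 1))) := by
          intro σ' hσ'
          rw [mem_partsOf] at hσ'
          have hnot : insert e B ∉ σ' := by
            intro hmem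
            have h1 : e ∈ σ'.biUnion id :=
              Finset.mem_biUnion.mpr ⟨_, hmem, Finset.mem_insert_self e B⟩
            rw [hσ'.2.2] at h1
            simp at h1
          rw [Finset.card_insert_of_notMem hnot, Finset.prod_insert hnot]
          have hv : (∑ i ∈ insert e B, x i) ^ ((insert e B).card - 1)
              = (x e + ∑ i ∈ B, x i) ^ B.card := by
            rw [Finset.sum_insert heB, Finset.card_insert_of_notMem heB]
            simp
          rw [hv, Polynomial.C_mul, map_pow, Polynomial.C_add, map_sum]
          ring
        rw [Finset.sum_congr rfl hterm, ← Finset.mul_sum]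
        have hcard : ((S.erase e) \ B).card < m := by
          have h1 : (S.erase e).card = m - 1 := by rw [Finset.card_erase_of_mem he, hS]
          have h2 : ((S.erase e) \ B).card ≤ (S.erase e).card :=
            Finset.card_le_card (Finset.sdiff_subset)
          omega
        rw [ih _ hcard _ rfl]
        ring
      rw [Finset.sum_congr rfl hinner]
      have hsum : ∑ B ∈ (S.erase e).powerset,
          rho Polynomial.X ((S.erase e) \ B) (fun i => Polynomial.C (x i)) *
            ((Polynomial.C (x e) + ∑ i ∈ B, Polynomial.C (x i)) ^ B.card * Polynomial.X)
          = Polynomial.X * ∑ B ∈ (S.erase e).powerset,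
              rho Polynomial.X ((S.erase e) \ B) (fun i => Polynomial.C (x i)) *
                (Polynomial.C (x e) + ∑ i ∈ B, Polynomial.C (x i)) ^ B.card := by
        rw [Finset.mul_sum]
        exact Finset.sum_congr rfl fun B _ => by ring
      rw [hsum, hurwitz Polynomial.X (Polynomial.C (x e)) (fun i => Polynomial.C (x i)) (S.erase e)]
      have hSne' : S ≠ ∅ := Finset.nonempty_iff_ne_empty.mp ⟨e, he⟩
      rw [rho, if_neg hSne']
      have h1 : Polynomial.X + Polynomial.C (x e) + ∑ i ∈ S.erase e, Polynomial.C (x i)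
          = Polynomial.X + Polynomial.C (∑ i ∈ S, x i) := by
        rw [← Finset.add_sum_erase _ x he, Polynomial.C_add, map_sum]
        ring
      rw [h1, Finset.card_erase_of_mem he]
      simp only [map_sum]
  end GenFun


/-- First partition identity: summing, over all partitions of `{1,...,n}` into `k` blocks,
the product over blocks `τ` of `(s_τ)^{|τ|-1}` gives `C(n-1,k-1) (x₁+⋯+xₙ)^{n-k}`. -/
theorem first_partition_identity (n k : ℕ) (hk : 1 ≤ k) (hkn : k ≤ n)
    {A : Type*} [CommRing A] (x : Fin n → A) :
    ∑ σ ∈ (univ : Finset (Finset (Finset (Fin n)))).filter (fun σ => IsPartitionInto σ k),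
      ∏ τ ∈ σ, (∑ i ∈ τ, x i) ^ (τ.card - 1)
    = ((n - 1).choose (k - 1) : A) * (∑ i, x i) ^ (n - k) := by
  have hn : 1 ≤ n := hk.trans hkn
  have huniv : (univ : Finset (Fin n)).card = n := by simp
  have hg := genfun x n (univ : Finset (Fin n)) huniv
  have hne : (univ : Finset (Fin n)) ≠ ∅ := by
    have : (⟨0, hn⟩ : Fin n) ∈ (univ : Finset (Fin n)) := Finset.mem_univ _
    exact Finset.ne_empty_of_mem this
  rw [rho, if_neg hne, huniv] at hg
  have hco := congrArg (fun p => Polynomial.coeff p k) hg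
  simp only [Polynomial.finset_sum_coeff] at hco
  have hterm : ∀ σ ∈ partsOf (univ : Finset (Fin n)),
      (Polynomial.X ^ σ.card *
        Polynomial.C (∏ τ ∈ σ, (∑ i ∈ τ, x i) ^ (τ.card - 1))).coeff k
      = if k = σ.card then (∏ τ ∈ σ, (∑ i ∈ τ, x i) ^ (τ.card - 1)) else 0 := by
    intro σ _
    rw [mul_comm, Polynomial.coeff_C_mul_X_pow]
  rw [Finset.sum_congr rfl hterm, ← Finset.sum_filter] at hco
  have hsets : (partsOf (univ : Finset (Fin n))).filter (fun σ => k = σ.card)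
      = (univ : Finset (Finset (Finset (Fin n)))).filter (fun σ => IsPartitionInto σ k) := by
    ext σ
    rw [Finset.mem_filter, Finset.mem_filter]
    simp only [Finset.mem_filter, mem_partsOf, isPartOf, IsPartitionInto, Finset.mem_univ, true_and]
    constructor
    · rintro ⟨⟨h1, h2, h3⟩, h4⟩
      exact ⟨h1, h2, h3, h4.symm⟩
    · rintro ⟨h1, h2, h3, h4⟩
      exact ⟨⟨h1, h2, h3⟩, h4.symm⟩
  rw [hsets] at hco
  rw [hco]
  obtain ⟨k', rfl⟩ : ∃ k', k = k' + 1 := ⟨k - 1, by omega⟩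
  simp only [← map_sum]
  show (Polynomial.X * (Polynomial.X + Polynomial.C (∑ i, x i)) ^ (n - 1)).coeff (k' + 1) = _
  rw [Polynomial.coeff_X_mul, Polynomial.coeff_X_add_C_pow]
  rw [show n - 1 - k' = n - (k' + 1) by omega, show k' + 1 - 1 = k' from rfl]
  ring
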